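/- For every real number t with |t| < 1, one has the convergent Maclaurin series expansion e^{arcsinh t} = 1 + t − t² · Σ_{k=0}^∞ B((2k−1)/2, 2k+1) · (2t)^{2k}/(k+1), where B(z, n) = z(z−1)(z−2)⋯(z−n+1)/n! denotes the generalized binomial coefficient and arcsinh t = ln(t + √(1+t²)) is the inverse hyperbolic sine. -/

import Mathlib

open Polynomial Nat Finset

lemma catalan_rec (k : ℕ) : ((k:ℝ)+2) * catalan (k+1) = 2*(2*(k:ℝ)+1) * catalan k := by
  have h1 := succ_mul_catalan_eq_centralBinom (k+1)
  have h2 := Nat.succ_mul_centralBinom_succ k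
  have h3 := succ_mul_catalan_eq_centralBinom k
  have key : (k+1) * ((k+2) * catalan (k+1)) = (k+1) * (2*(2*k+1) * catalan k) := by
    calc (k+1) * ((k+2) * catalan (k+1)) = (k+1) * centralBinom (k+1) := by rw [← h1]
    _ = 2*(2*k+1) * centralBinom k := h2
    _ = 2*(2*k+1) * ((k+1) * catalan k) := by rw [h3]
    _ = (k+1) * (2*(2*k+1) * catalan k) := by ring
  have h4 : ((k:ℝ)+1) * (((k:ℝ)+2) * catalan (k+1)) = ((k:ℝ)+1) * (2*(2*(k:ℝ)+1) * catalan k) := by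
    exact_mod_cast congrArg (Nat.cast : ℕ → ℝ) key
  have h5 : ((k:ℝ)+1) ≠ 0 := by positivity
  exact mul_left_cancel₀ h5 h4

lemma descP_key (k : ℕ) : (descPochhammer ℝ (2*k+1)).eval ((2*(k:ℝ)-1)/2)
    = (-1)^(k+1) * catalan k * ((2*k+1).factorial) * ((k:ℝ)+1) / (2 * 16^k) := by
  induction k with
  | zero => simp [descPochhammer_succ_eval]
  | succ k ih =>
    have hrec : (descPochhammer ℝ (2*(k+1)+1)).eval ((2*((k:ℝ)+1)-1)/2)
        = (descPochhammer ℝ (2*k+1)).eval ((2*(k:ℝ)-1)/2) * (-(2*(k:ℝ)+1)*(2*k+3)/4) := by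
      have h1 : 2*(k+1)+1 = (2*k+2)+1 := by ring
      rw [h1, descPochhammer_succ_left]
      rw [eval_mul, eval_X, eval_comp, eval_sub, eval_X, eval_one]
      rw [show (2*k+2 : ℕ) = (2*k+1)+1 from rfl, descPochhammer_succ_eval]
      push_cast
      ring_nf
    have hfac : ((2*(k+1)+1).factorial : ℝ) = (2*(k:ℝ)+3)*(2*k+2)*((2*k+1).factorial) := by
      rw [show 2*(k+1)+1 = (2*k+2)+1 by ring, Nat.factorial_succ,
        show (2*k+2 : ℕ) = (2*k+1)+1 from rfl, Nat.factorial_succ]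
      push_cast
      ring
    push_cast at hrec ⊢
    rw [hrec, ih, hfac]
    have hc := catalan_rec k
    push_cast at hc ⊢
    linear_combination (-(-1:ℝ)^(k+2) * ((2*k+1).factorial : ℝ) * ((2*(k:ℝ)+3)*(2*k+2)) / (2*16^(k+1))) * hc

lemma catalan_le_four_pow (n : ℕ) : catalan n ≤ 4^n := by
  have h1 : catalan n ≤ n.centralBinom := by
    rw [catalan_eq_centralBinom_div]
    exact Nat.div_le_self _ _
  refine h1.trans ?_
  rw [Nat.centralBinom]
  calc (2*n).choose n ≤ ∑ m ∈ range (2*n+1), (2*n).choose m :=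
        Finset.single_le_sum (fun i _ => Nat.zero_le _) (by simp; omega)
  _ = 2^(2*n) := Nat.sum_range_choose _
  _ = 4^n := by rw [pow_mul]; norm_num

/-- Maclaurin series for `e^{arcsinh t}`:
`e^{arcsinh t} = 1 + t − t² ∑_{k=0}^∞ B((2k−1)/2, 2k+1) (2t)^{2k}/(k+1)`,
where `B(z,n) = z(z−1)⋯(z−n+1)/n!` is the generalized binomial coefficient. -/
theorem exp_arsinh_maclaurin (t : ℝ) (ht : |t| < 1) :
    ∃ S : ℝ,
      HasSum (fun k : ℕ =>
        (descPochhammer ℝ (2 * k + 1)).eval ((2 * (k : ℝ) - 1) / 2) /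
            ((2 * k + 1).factorial : ℝ) * (2 * t) ^ (2 * k) / ((k : ℝ) + 1)) S ∧
      Real.exp (Real.arsinh t) = 1 + t - t ^ 2 * S := by
  have ht2 : t^2 < 1 := by
    have := abs_nonneg t
    nlinarith [sq_abs t]
  have ht2' : (0:ℝ) ≤ t^2 := sq_nonneg t
  set u : ℝ := -(t^2/4) with hu
  set f : ℕ → ℝ := fun n => (catalan n : ℝ) * u^n with hfdef
  -- summability
  have hbound : ∀ n, ‖f n‖ ≤ (t^2)^n := by
    intro n
    have h1 : ‖f n‖ = (catalan n : ℝ) * |u|^n := by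
      rw [hfdef]; simp [abs_mul, abs_pow]
    rw [h1]
    have h2 : |u| = t^2/4 := by rw [hu, abs_neg, abs_of_nonneg (by positivity)]
    rw [h2]
    have h3 : (catalan n : ℝ) ≤ 4^n := by exact_mod_cast catalan_le_four_pow n
    calc (catalan n : ℝ) * (t^2/4)^n ≤ 4^n * (t^2/4)^n := by
          apply mul_le_mul_of_nonneg_right h3 (by positivity)
    _ = (t^2)^n := by rw [← mul_pow]; ring_nf
  have hnorm : Summable (fun n => ‖f n‖) :=
    Summable.of_nonneg_of_le (fun n => norm_nonneg _) hbound
      (summable_geometric_of_lt_one ht2' ht2)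
  have hfs : Summable f := hnorm.of_norm
  set g : ℝ := ∑' n, f n with hg
  have hf : HasSum f g := hfs.hasSum
  -- Cauchy product
  have hcp : HasSum (fun n => ∑ k ∈ range (n+1), f k * f (n-k)) (g*g) := by
    have := hasSum_sum_range_mul_of_summable_norm hnorm hnorm
    rwa [← hg] at this
  have hcp2 : HasSum (fun n => (catalan (n+1) : ℝ) * u^n) (g*g) := by
    have hfun : ∀ n, ∑ k ∈ range (n+1), f k * f (n-k) = (catalan (n+1) : ℝ) * u^n := by
      intro n
      have hterm : ∀ k ∈ range (n+1), f k * f (n-k)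
          = ((catalan k * catalan (n-k) : ℕ) : ℝ) * u^n := by
        intro k hk
        simp only [Finset.mem_range] at hk
        simp only [hfdef]
        push_cast
        rw [mul_mul_mul_comm, ← pow_add, show k + (n-k) = n by omega]
      rw [Finset.sum_congr rfl hterm, ← Finset.sum_mul, ← Nat.cast_sum]
      congr 2
      rw [catalan_succ',
        Nat.sum_antidiagonal_eq_sum_range_succ (fun x y => catalan x * catalan y) n]
    rwa [funext hfun] at hcp
  have hshift : HasSum (fun n => f (n+1)) (u*(g*g)) := by
    have := hcp2.mul_left u
    convert this using 2 with n
    case e'_3 => rfl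
    show (catalan (n+1) : ℝ) * u^(n+1) = _
    ring
  have hgeq : g = u*(g*g) + 1 := by
    have h1 : HasSum f (u*(g*g) + ∑ i ∈ range 1, f i) := (hasSum_nat_add_iff 1).mp hshift
    have h2 := hf.unique h1
    simpa [hfdef] using h2
  -- nonnegativity of g
  have hcat4 : ∀ k, (catalan (k+1) : ℝ) ≤ 4 * catalan k := by
    intro k
    have hc := catalan_rec k
    have hk2 : (0:ℝ) < (k:ℝ)+2 := by positivity
    nlinarith [hc, show (0:ℝ) ≤ (catalan k : ℝ) from Nat.cast_nonneg _]
  have hgnonneg : 0 ≤ g := by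
    have hse : Summable (fun m => f (2*m)) :=
      hfs.comp_injective (fun a b h => by omega)
    have hso : Summable (fun m => f (2*m+1)) :=
      hfs.comp_injective (fun a b h => by omega)
    have heven := hse.hasSum
    have hodd := hso.hasSum
    have hsum := HasSum.even_add_odd heven hodd
    have hgeq2 : g = (∑' m, f (2*m)) + (∑' m, f (2*m+1)) := hf.unique hsum
    have hpair : HasSum (fun m => f (2*m) + f (2*m+1)) ((∑' m, f (2*m)) + (∑' m, f (2*m+1))) :=
      heven.add hodd
    have hterm : ∀ m, 0 ≤ f (2*m) + f (2*m+1) := by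
      intro m
      simp only [hfdef]
      have h1 : u^(2*m) = (t^2/4)^(2*m) := by
        rw [hu, show (-(t^2/4))^(2*m) = ((-(t^2/4))^2)^m by rw [← pow_mul],
          show (-(t^2/4))^2 = ((t^2/4))^2 by ring, ← pow_mul]
      have h2 : u^(2*m+1) = -(t^2/4) * (t^2/4)^(2*m) := by
        rw [pow_succ, h1, hu]; ring
      rw [h1, h2]
      have h3 : (catalan (2*m+1) : ℝ) * (t^2/4) ≤ (catalan (2*m) : ℝ) := by
        calc (catalan (2*m+1) : ℝ) * (t^2/4) ≤ (4 * catalan (2*m)) * (t^2/4) := by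
              apply mul_le_mul_of_nonneg_right (hcat4 (2*m)) (by positivity)
        _ = (catalan (2*m) : ℝ) * t^2 := by ring
        _ ≤ (catalan (2*m) : ℝ) * 1 := by
              apply mul_le_mul_of_nonneg_left ht2.le (Nat.cast_nonneg _)
        _ = _ := mul_one _
      have h4 : (0:ℝ) ≤ (t^2/4)^(2*m) := by positivity
      nlinarith
    rw [hgeq2]
    exact hasSum_le hterm hasSum_zero hpair
  -- sqrt identity
  have hr : Real.sqrt (1 + t^2) = 1 + t^2*g/2 := by
    have hrsq : (1 + t^2*g/2)^2 = 1 + t^2 := by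
      have : g = -(t^2/4)*(g*g) + 1 := by rw [← hu]; exact hgeq
      linear_combination (t^2) * this
    rw [← hrsq, Real.sqrt_sq (by positivity)]
  refine ⟨-(1/2) * g, ?_, ?_⟩
  · have hs := hf.mul_left (-(1/2 : ℝ))
    convert hs using 2 with k
    case e'_3 => rfl
    rw [descP_key k]
    have hfk : f k = (catalan k : ℝ) * u^k := rfl
    rw [hfk, hu]
    have hfacpos : ((2*k+1).factorial : ℝ) ≠ 0 := by positivity
    have h16 : ((16:ℝ))^k ≠ 0 := by positivity
    have hk1 : ((k:ℝ)+1) ≠ 0 := by positivity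
    have hne : (-(t^2/4))^k = (-1)^k * (t^2/4)^k := by rw [neg_pow]
    rw [hne]
    have h2t : (2*t)^(2*k) = 4^k * (t^2)^k := by
      rw [mul_pow, pow_mul 2, pow_mul t]; norm_num
    rw [h2t, show ((16:ℝ))^k = 4^k*4^k by rw [← mul_pow]; norm_num]
    field_simp
    have h14 : ((1:ℝ)/4)^k * 4^k = 1 := by rw [← mul_pow]; norm_num
    linear_combination ((catalan k : ℝ) * t^(k*2) * (-1)^k) * h14
  · rw [Real.exp_arsinh, hr]
    ring
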